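/- Let nonnegative sequences {r_t}, {s_t} satisfy r_{t+1} ≤ r_t − Bγ s_t + Cγ² + Dγ³ for all t, with constants B > 0, C, D ≥ 0 and stepsize 0 < γ ≤ 1/E (E ≥ 0). Then there exists a constant stepsize γ ≤ 1/E such that (B/(T+1)) ∑_{t=0}^T s_t ≤ E r_0/(T+1) + 2 D^{1/3} (r_0/(T+1))^{2/3} + 2 (C r_0/(T+1))^{1/2}. -/

import Mathlib

set_option maxHeartbeats 1000000


theorem summation_lemma_sublinear
    (r s : ℕ → ℝ) (hr : ∀ t, 0 ≤ r t) (hs : ∀ t, 0 ≤ s t)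
    (B C D E : ℝ) (hB : 0 < B) (hC : 0 ≤ C) (hD : 0 ≤ D) (hE : 0 ≤ E)
    (hrec : ∀ γ : ℝ, 0 < γ → γ * E ≤ 1 →
      ∀ t, r (t + 1) ≤ r t - B * γ * s t + C * γ ^ 2 + D * γ ^ 3)
    (T : ℕ) :
    ∃ γ : ℝ, 0 < γ ∧ γ * E ≤ 1 ∧
      (B / ((T : ℝ) + 1)) * ∑ t ∈ Finset.range (T + 1), s t ≤
        E * r 0 / ((T : ℝ) + 1)
          + 2 * D ^ ((1 : ℝ) / 3) * (r 0 / ((T : ℝ) + 1)) ^ ((2 : ℝ) / 3)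
          + 2 * (C * r 0 / ((T : ℝ) + 1)) ^ ((1 : ℝ) / 2) := by
  set n : ℝ := (T : ℝ) + 1 with hn_def
  have hn : (0:ℝ) < n := by positivity
  set S : ℝ := ∑ t ∈ Finset.range (T + 1), s t with hSdef
  have hS0 : 0 ≤ S := Finset.sum_nonneg fun t _ => hs t
  have key : ∀ γ : ℝ, 0 < γ → γ * E ≤ 1 →
      B * γ * S ≤ r 0 + n * (C * γ ^ 2 + D * γ ^ 3) := by
    intro γ hγ hγE
    have h1 : ∑ t ∈ Finset.range (T + 1), (B * γ * s t)
        ≤ ∑ t ∈ Finset.range (T + 1), ((r t - r (t+1)) + (C * γ ^ 2 + D * γ ^ 3)) :=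
      Finset.sum_le_sum fun t _ => by linarith [hrec γ hγ hγE t]
    rw [Finset.sum_add_distrib, Finset.sum_range_sub' r, Finset.sum_const,
        Finset.card_range, nsmul_eq_mul] at h1
    have h2 : B * γ * S = ∑ t ∈ Finset.range (T + 1), (B * γ * s t) := by
      rw [hSdef, Finset.mul_sum]
    push_cast at h1
    have hrT := hr (T+1)
    rw [h2]
    rw [hn_def]
    linarith
  have bound : ∀ γ : ℝ, 0 < γ → γ * E ≤ 1 →
      B / n * S ≤ r 0 / (n * γ) + C * γ + D * γ ^ 2 := by
    intro γ hγ hγE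
    have hk := key γ hγ hγE
    have h3 : (r 0 / (n * γ) + C * γ + D * γ ^ 2) * (n * γ)
        = r 0 + n * (C * γ ^ 2 + D * γ ^ 3) := by field_simp; ring
    have h4 : (B / n * S) * (n * γ) = B * γ * S * 1 := by field_simp
    have h5 : (B / n * S) * (n * γ) ≤ (r 0 / (n * γ) + C * γ + D * γ ^ 2) * (n * γ) := by
      rw [h3, h4]; linarith
    exact le_of_mul_le_mul_right h5 (by positivity)
  rcases eq_or_lt_of_le (hr 0) with h0 | h0
  · -- r 0 = 0
    have hBS : B * S ≤ 0 := by
      by_contra h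
      push_neg at h
      set γ := min (min 1 (1/(E+1))) (B * S / (2 * n * (C + D + 1))) with hγdef
      have hγpos : 0 < γ := lt_min (lt_min one_pos (by positivity)) (by positivity)
      have hγ1 : γ ≤ 1 := le_trans (min_le_left _ _) (min_le_left _ _)
      have hγE' : γ ≤ 1/(E+1) := le_trans (min_le_left _ _) (min_le_right _ _)
      have hγE : γ * E ≤ 1 := by
        have hE1 : (0:ℝ) < E + 1 := by positivity
        have := (le_div_iff₀ hE1).mp hγE'
        nlinarith
      have hγ3 : γ ≤ B * S / (2 * n * (C + D + 1)) := min_le_right _ _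
      have hγ3' : γ * (2 * n * (C + D + 1)) ≤ B * S :=
        (le_div_iff₀ (by positivity)).mp hγ3
      have hk := key γ hγpos hγE
      rw [← h0] at hk
      have hcube : γ ^ 3 ≤ γ ^ 2 := by nlinarith
      nlinarith [mul_le_mul_of_nonneg_right hγ3' hγpos.le,
        mul_le_mul_of_nonneg_left hcube (mul_nonneg hn.le hD),
        mul_pos hn (mul_pos hγpos hγpos)]
    have hSle : S ≤ 0 := by nlinarith
    refine ⟨1/(E+1), by positivity, ?_, ?_⟩
    · have hE1 : (0:ℝ) < E + 1 := by positivity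
      rw [div_mul_eq_mul_div, div_le_one hE1]; linarith
    · rw [← h0]
      have h12 : ((1:ℝ)/2) ≠ 0 := by norm_num
      have h23 : ((2:ℝ)/3) ≠ 0 := by norm_num
      simp [Real.zero_rpow h12, Real.zero_rpow h23]
      have : B / n * S ≤ 0 := mul_nonpos_of_nonneg_of_nonpos (by positivity) hSle
      linarith
  · -- r 0 > 0
    obtain ⟨a, hadef⟩ : ∃ a : ℝ, a = r 0 / n := ⟨_, rfl⟩
    have ha : 0 < a := by rw [hadef]; positivity
    obtain ⟨α, hαdef⟩ : ∃ α : ℝ, α = a ^ ((1:ℝ)/6) := ⟨_, rfl⟩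
    have hα : 0 < α := by rw [hαdef]; exact Real.rpow_pos_of_pos ha _
    obtain ⟨c, hcdef⟩ : ∃ c : ℝ, c = C ^ ((1:ℝ)/2) := ⟨_, rfl⟩
    obtain ⟨d, hddef⟩ : ∃ d : ℝ, d = D ^ ((1:ℝ)/3) := ⟨_, rfl⟩
    have hc : 0 ≤ c := hcdef ▸ Real.rpow_nonneg hC _
    have hd : 0 ≤ d := hddef ▸ Real.rpow_nonneg hD _
    have hc2 : c ^ 2 = C := by
      rw [hcdef, ← Real.rpow_natCast (C ^ ((1:ℝ)/2)) 2, ← Real.rpow_mul hC]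
      norm_num
    have hd3 : d ^ 3 = D := by
      rw [hddef, ← Real.rpow_natCast (D ^ ((1:ℝ)/3)) 3, ← Real.rpow_mul hD]
      norm_num
    have hα6 : α ^ 6 = a := by
      rw [hαdef, ← Real.rpow_natCast (a ^ ((1:ℝ)/6)) 6, ← Real.rpow_mul ha.le]
      norm_num
    have hα4 : α ^ 4 = a ^ ((2:ℝ)/3) := by
      rw [hαdef, ← Real.rpow_natCast (a ^ ((1:ℝ)/6)) 4, ← Real.rpow_mul ha.le]
      norm_num
    have hα3 : α ^ 3 = a ^ ((1:ℝ)/2) := by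
      rw [hαdef, ← Real.rpow_natCast (a ^ ((1:ℝ)/6)) 3, ← Real.rpow_mul ha.le]
      norm_num
    have hCa : (C * a) ^ ((1:ℝ)/2) = c * α ^ 3 := by
      rw [Real.mul_rpow hC ha.le, hα3, hcdef]
    by_cases hzero : E = 0 ∧ C = 0 ∧ D = 0
    · obtain ⟨hE0, hC0, hD0⟩ := hzero
      subst hE0; subst hC0; subst hD0
      have hBS : B * S ≤ 0 := by
        by_contra h
        push_neg at h
        have hγpos : (0:ℝ) < 2 * (r 0 + 1) / (B * S) := by positivity
        have hk := key _ hγpos (by simp)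
        have heq : B * (2 * (r 0 + 1) / (B * S)) * S = 2 * (r 0 + 1) := by
          field_simp
          ring_nf; exact mul_inv_cancel₀ (by rintro hS; simp [hS] at h)
        rw [heq] at hk
        nlinarith
      refine ⟨1, one_pos, by simp, ?_⟩
      have h12 : ((1:ℝ)/2) ≠ 0 := by norm_num
      have h13 : ((1:ℝ)/3) ≠ 0 := by norm_num
      simp only [zero_mul, zero_div, Real.zero_rpow h12, Real.zero_rpow h13, mul_zero,
        add_zero, zero_add]
      have hSle : S ≤ 0 := by nlinarith
      have : B / n * S ≤ 0 := mul_nonpos_of_nonneg_of_nonpos (by positivity) hSle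
      linarith
    · set x : ℝ := E + c / α ^ 3 + d / α ^ 2 with hxdef
      have hx : 0 < x := by
        rcases not_and_or.mp hzero with hE0 | h'
        · have : 0 < E := lt_of_le_of_ne hE (Ne.symm hE0)
          have h1 : 0 ≤ c / α ^ 3 := by positivity
          have h2 : 0 ≤ d / α ^ 2 := by positivity
          rw [hxdef]; linarith
        · rcases not_and_or.mp h' with hC0 | hD0
          · have hCpos : 0 < C := lt_of_le_of_ne hC (Ne.symm hC0)
            have hcpos : 0 < c := hcdef ▸ Real.rpow_pos_of_pos hCpos _
            have h1 : 0 < c / α ^ 3 := by positivity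
            have h2 : 0 ≤ d / α ^ 2 := by positivity
            rw [hxdef]; linarith
          · have hDpos : 0 < D := lt_of_le_of_ne hD (Ne.symm hD0)
            have hdpos : 0 < d := hddef ▸ Real.rpow_pos_of_pos hDpos _
            have h1 : 0 ≤ c / α ^ 3 := by positivity
            have h2 : 0 < d / α ^ 2 := by positivity
            rw [hxdef]; linarith
      have hEx : E ≤ x := by
        have h1 : 0 ≤ c / α ^ 3 := by positivity
        have h2 : 0 ≤ d / α ^ 2 := by positivity
        rw [hxdef]; linarith
      refine ⟨x⁻¹, inv_pos.mpr hx, ?_, ?_⟩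
      · calc x⁻¹ * E ≤ x⁻¹ * x := mul_le_mul_of_nonneg_left hEx (inv_nonneg.mpr hx.le)
          _ = 1 := inv_mul_cancel₀ hx.ne'
      · have hb := bound x⁻¹ (inv_pos.mpr hx) (by
          calc x⁻¹ * E ≤ x⁻¹ * x := mul_le_mul_of_nonneg_left hEx (inv_nonneg.mpr hx.le)
            _ = 1 := inv_mul_cancel₀ hx.ne')
        have hax : r 0 / (n * x⁻¹) = E * a + c * α ^ 3 + d * α ^ 4 := by
          have hax0 : r 0 / (n * x⁻¹) = a * x := by
            rw [hadef]
            rw [← div_eq_mul_inv, div_div_eq_mul_div]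
            ring
          have hax1 : a * x = E * a + c * α ^ 3 + d * α ^ 4 := by
            rw [hxdef, ← hα6]
            field_simp
          rw [hax0, hax1]
        have hcx : c / α ^ 3 ≤ x := by
          have h2 : 0 ≤ d / α ^ 2 := by positivity
          rw [hxdef]; linarith
        have hdx : d / α ^ 2 ≤ x := by
          have h1 : 0 ≤ c / α ^ 3 := by positivity
          rw [hxdef]; linarith
        have e2 : C * x⁻¹ ≤ c * α ^ 3 := by
          rcases eq_or_lt_of_le hc with hc0 | hcpos
          · rw [← hc2, ← hc0]; simp
          · have hinv : x⁻¹ ≤ α ^ 3 / c := by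
              rw [← inv_div]
              exact inv_anti₀ (by positivity) hcx
            calc C * x⁻¹ ≤ C * (α ^ 3 / c) :=
                  mul_le_mul_of_nonneg_left hinv hC
              _ = c * α ^ 3 := by rw [← hc2]; field_simp
        have e3 : D * (x⁻¹) ^ 2 ≤ d * α ^ 4 := by
          rcases eq_or_lt_of_le hd with hd0 | hdpos
          · rw [← hd3, ← hd0]; simp
          · have hinv : x⁻¹ ≤ α ^ 2 / d := by
              rw [← inv_div]
              exact inv_anti₀ (by positivity) hdx
            have hinv2 : (x⁻¹) ^ 2 ≤ (α ^ 2 / d) ^ 2 :=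
              pow_le_pow_left₀ (inv_nonneg.mpr hx.le) hinv 2
            calc D * (x⁻¹) ^ 2 ≤ D * (α ^ 2 / d) ^ 2 :=
                  mul_le_mul_of_nonneg_left hinv2 hD
              _ = d * α ^ 4 := by rw [← hd3]; field_simp
        have hRHS1 : E * r 0 / n = E * a := by rw [hadef]; ring
        have hRHS2 : (r 0 / n) ^ ((2:ℝ)/3) = α ^ 4 := by rw [← hadef]; exact hα4.symm
        have hRHS3 : (C * r 0 / n) ^ ((1:ℝ)/2) = c * α ^ 3 := by
          rw [← hCa, hadef]; ring_nf
        rw [hRHS1, hRHS2, hRHS3, ← hddef]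
        rw [hax] at hb
        linarith
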